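/- For the evolution U(t) constructed from the permutation Π = |4⟩⟨0|+|0⟩⟨2|+|2⟩⟨4|+|1⟩⟨3|+|3⟩⟨1| on ℂ⁵ with eigenbasis mixing parameters α, β and integer spectrum shifts, the transition amplitude from node 0 to a non-logical node is ⟨1|U(t)|0⟩ = ⟨3|U(t)|0⟩ = (βα*/√6)(e^{-2πi x₀^{(1)} t'} - e^{-2πi x₀^{(2)} t'}). In particular this amplitude vanishes for all t whenever α = 0, β = 0, or x₀^{(1)} = x₀^{(2)}. -/

import Mathlib

/-- For the evolution `U(t)` constructed from the permutation
`P = |4⟩⟨0|+|0⟩⟨2|+|2⟩⟨4|+|1⟩⟨3|+|3⟩⟨1|` on `ℂ⁵` with eigenbasis mixing parameters `α, β`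
and integer spectrum shifts, the transition amplitude from node `0` to a non-logical node is
`⟨1|U(t)|0⟩ = ⟨3|U(t)|0⟩ = (βα*/√6)(e^{-2πi x₀⁽¹⁾ t'} - e^{-2πi x₀⁽²⁾ t'})`; in particular
this amplitude vanishes for all `t` whenever `α = 0`, `β = 0`, or `x₀⁽¹⁾ = x₀⁽²⁾`. -/
theorem stmt_15
    (e : Fin 5 → (Fin 5 → ℂ)) (he : ∀ k, e k = Pi.single k 1)
    (α β : ℂ) (hαβ : ‖α‖ ^ 2 + ‖β‖ ^ 2 = 1)
    (v00 v10 v1pi v0a v0b : Fin 5 → ℂ)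
    (hv00 : v00 = ((1 / Real.sqrt 3 : ℝ) : ℂ) • (e 0 + e 2 + e 4))
    (hv10 : v10 = ((1 / Real.sqrt 2 : ℝ) : ℂ) • (e 1 + e 3))
    (hv1pi : v1pi = ((1 / Real.sqrt 2 : ℝ) : ℂ) • (e 1 - e 3))
    (hv0a : v0a = ((1 / Real.sqrt 3 : ℝ) : ℂ) •
      (e 0 + Complex.exp (2 * Real.pi * Complex.I / 3) • e 2 +
        Complex.exp (4 * Real.pi * Complex.I / 3) • e 4))
    (hv0b : v0b = ((1 / Real.sqrt 3 : ℝ) : ℂ) •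
      (e 0 + Complex.exp (4 * Real.pi * Complex.I / 3) • e 2 +
        Complex.exp (8 * Real.pi * Complex.I / 3) • e 4))
    (y : Fin 5 → (Fin 5 → ℂ))
    (hy : y = ![α • v00 + β • v10, (starRingEnd ℂ β) • v00 - (starRingEnd ℂ α) • v10,
      v1pi, v0a, v0b])
    (x01 x02 xpi xa xb : ℤ) (τ : ℝ) (hτ : 0 < τ)
    (ε : Fin 5 → ℝ)
    (hε : ε = ![2 * Real.pi * (x01 : ℝ), 2 * Real.pi * (x02 : ℝ),
      -Real.pi + 2 * Real.pi * (xpi : ℝ),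
      -(2 * Real.pi / 3) + 2 * Real.pi * (xa : ℝ),
      -(4 * Real.pi / 3) + 2 * Real.pi * (xb : ℝ)])
    (U : ℝ → Matrix (Fin 5) (Fin 5) ℂ)
    (hU : ∀ t : ℝ, U t = ∑ i : Fin 5,
      Complex.exp (-(Complex.I * ((ε i : ℂ)) * (t : ℂ) / (τ : ℂ))) •
        Matrix.vecMulVec (y i) (star (y i))) :
    (∀ t : ℝ,
      dotProduct (star (e 1)) ((U t).mulVec (e 0)) =
        dotProduct (star (e 3)) ((U t).mulVec (e 0)) ∧
      dotProduct (star (e 1)) ((U t).mulVec (e 0)) =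
        (β * (starRingEnd ℂ α) / (Real.sqrt 6 : ℂ)) *
          (Complex.exp (-(2 * Real.pi * Complex.I * (x01 : ℂ) * ((t / τ : ℝ) : ℂ))) -
           Complex.exp (-(2 * Real.pi * Complex.I * (x02 : ℂ) * ((t / τ : ℝ) : ℂ))))) ∧
    ((α = 0 ∨ β = 0 ∨ x01 = x02) → ∀ t : ℝ,
      dotProduct (star (e 1)) ((U t).mulVec (e 0)) = 0) := by

  have hτ' : (τ:ℂ) ≠ 0 := by exact_mod_cast hτ.ne'
  have h2 : ((Real.sqrt 2 : ℝ):ℂ) ≠ 0 := by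
    exact_mod_cast (Real.sqrt_pos.mpr (by norm_num : (0:ℝ) < 2)).ne'
  have h3 : ((Real.sqrt 3 : ℝ):ℂ) ≠ 0 := by
    exact_mod_cast (Real.sqrt_pos.mpr (by norm_num : (0:ℝ) < 3)).ne'
  have h6c : ((Real.sqrt 6 : ℝ):ℂ) = (Real.sqrt 2 : ℂ) * (Real.sqrt 3 : ℂ) := by
    rw [← Complex.ofReal_mul, ← Real.sqrt_mul (by norm_num)]
    norm_num
  subst hy hv00 hv10 hv1pi hv0a hv0b hε
  have key : ∀ t : ℝ, dotProduct (star (e 1)) ((U t).mulVec (e 0)) =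
      (β * (starRingEnd ℂ α) / (Real.sqrt 6 : ℂ)) *
        (Complex.exp (-(2 * Real.pi * Complex.I * (x01 : ℂ) * ((t / τ : ℝ) : ℂ))) -
         Complex.exp (-(2 * Real.pi * Complex.I * (x02 : ℂ) * ((t / τ : ℝ) : ℂ)))) := by
    intro t
    simp only [hU, he]
    simp [dotProduct, Matrix.mulVec, Matrix.vecMulVec, Fin.sum_univ_five,
      Pi.single_apply]
    rw [show -(2 * (Real.pi:ℂ) * Complex.I * (x01:ℂ) * ((t:ℂ) / (τ:ℂ))) =
        -(Complex.I * (2 * (Real.pi:ℂ) * (x01:ℂ)) * (t:ℂ) / (τ:ℂ)) by ring,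
      show -(2 * (Real.pi:ℂ) * Complex.I * (x02:ℂ) * ((t:ℂ) / (τ:ℂ))) =
        -(Complex.I * (2 * (Real.pi:ℂ) * (x02:ℂ)) * (t:ℂ) / (τ:ℂ)) by ring,
      h6c]
    field_simp
    ring
  have key3 : ∀ t : ℝ, dotProduct (star (e 3)) ((U t).mulVec (e 0)) =
      (β * (starRingEnd ℂ α) / (Real.sqrt 6 : ℂ)) *
        (Complex.exp (-(2 * Real.pi * Complex.I * (x01 : ℂ) * ((t / τ : ℝ) : ℂ))) -
         Complex.exp (-(2 * Real.pi * Complex.I * (x02 : ℂ) * ((t / τ : ℝ) : ℂ)))) := by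
    intro t
    simp only [hU, he]
    simp [dotProduct, Matrix.mulVec, Matrix.vecMulVec, Fin.sum_univ_five,
      Pi.single_apply]
    rw [show -(2 * (Real.pi:ℂ) * Complex.I * (x01:ℂ) * ((t:ℂ) / (τ:ℂ))) =
        -(Complex.I * (2 * (Real.pi:ℂ) * (x01:ℂ)) * (t:ℂ) / (τ:ℂ)) by ring,
      show -(2 * (Real.pi:ℂ) * Complex.I * (x02:ℂ) * ((t:ℂ) / (τ:ℂ))) =
        -(Complex.I * (2 * (Real.pi:ℂ) * (x02:ℂ)) * (t:ℂ) / (τ:ℂ)) by ring,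
      h6c]
    field_simp
    ring
  refine ⟨fun t => ⟨(key t).trans (key3 t).symm, key t⟩, ?_⟩
  rintro (h | h | h) t <;> rw [key t] <;> simp [h]
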